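/- For every integer ℓ ≥ 1 and every n ∈ ℤ, if f(ℓ, x, q^ℓ·s) ≠ 0 then f(n, x, s) − (f(2ℓ, x, s)/f(ℓ, x, q^ℓ·s))·f(n−ℓ, x, q^ℓ·s) + (−1)^ℓ · q^{ℓ(3ℓ−1)/2} · s^ℓ · (f(ℓ, x, s)/f(ℓ, x, q^ℓ·s))·f(n−2ℓ, x, q^{2ℓ}·s) = 0. -/

import Mathlib

open Finset

variable {K : Type*} [Field K]

noncomputable def qFibPos (q x t : K) : ℕ → K
  | 0 => 0
  | 1 => 1
  | n + 2 => x * qFibPos q x t (n + 1) + q ^ n * t * qFibPos q x t n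

noncomputable def qFibNeg (q x t : K) : ℕ → K
  | 0 => 0
  | 1 => q / t
  | m + 2 => (qFibNeg q x t m - x * qFibNeg q x t (m + 1)) * q ^ (m + 2) / t

/-- The Carlitz q-Fibonacci polynomial `f(n, x, t)` for `n : ℤ`, defined by `f 0 = 0`,
`f 1 = 1` and `f n = x * f (n-1) + q^(n-2) * t * f (n-2)`, solved backwards for `n < 0`. -/
noncomputable def qFib (q x t : K) : ℤ → K
  | Int.ofNat n => qFibPos q x t n
  | Int.negSucc m => qFibNeg q x t (m + 1)


lemma qFib_natCast (q x t : K) (n : ℕ) : qFib q x t (n : ℤ) = qFibPos q x t n := rfl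

lemma qFib_negCast (q x t : K) (m : ℕ) : qFib q x t (-(m : ℤ)) = qFibNeg q x t m := by
  cases m with
  | zero => rfl
  | succ k =>
    rw [show (-((k+1:ℕ):ℤ) : ℤ) = Int.negSucc k by rw [Int.negSucc_eq]; push_cast; ring]
    rfl

lemma qFib_zero (q x t : K) : qFib q x t 0 = 0 := rfl
lemma qFib_one (q x t : K) : qFib q x t 1 = 1 := rfl

lemma qFib_rec (q x t : K) (hq : q ≠ 0) (ht : t ≠ 0) (n : ℤ) :
    qFib q x t (n + 2) = x * qFib q x t (n + 1) + q ^ n * t * qFib q x t n := by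
  rcases n with m | m
  · -- n = (m : ℕ)
    rw [show ((Int.ofNat m) + 2 : ℤ) = ((m + 2 : ℕ) : ℤ) by simp [Int.ofNat_eq_natCast],
        show ((Int.ofNat m) + 1 : ℤ) = ((m + 1 : ℕ) : ℤ) by simp [Int.ofNat_eq_natCast],
        show (Int.ofNat m : ℤ) = ((m : ℕ) : ℤ) by rfl]
    rw [qFib_natCast, qFib_natCast, qFib_natCast, zpow_natCast]
    rw [qFibPos]
  · -- n = Int.negSucc m = -(m+1)
    cases m with
    | zero =>
      rw [show ((Int.negSucc 0) + 2 : ℤ) = ((1:ℕ):ℤ) by decide,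
          show ((Int.negSucc 0) + 1 : ℤ) = ((0:ℕ):ℤ) by decide,
          show (Int.negSucc 0 : ℤ) = -((1:ℕ):ℤ) by decide]
      rw [qFib_natCast, qFib_natCast, qFib_negCast]
      show (1:K) = x * 0 + q ^ (-1 : ℤ) * t * (q / t)
      rw [zpow_neg, zpow_one]
      field_simp
      ring
    | succ k =>
      rw [show ((Int.negSucc (k+1)) + 2 : ℤ) = -((k:ℕ):ℤ) by rw [Int.negSucc_eq]; push_cast; ring,
          show ((Int.negSucc (k+1)) + 1 : ℤ) = -((k+1:ℕ):ℤ) by rw [Int.negSucc_eq]; push_cast; ring,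
          show (Int.negSucc (k+1) : ℤ) = -((k+2:ℕ):ℤ) by rw [Int.negSucc_eq]; push_cast; ring]
      rw [qFib_negCast, qFib_negCast, qFib_negCast]
      rw [zpow_neg, zpow_natCast]
      rw [qFibNeg]
      have hqp : (q:K) ^ (k+2) ≠ 0 := pow_ne_zero _ hq
      field_simp
      ring

lemma qFib_lin_unique (q x t : K) (hq : q ≠ 0) (ht : t ≠ 0) (D : ℤ → K)
    (hD : ∀ n : ℤ, D (n + 2) = x * D (n + 1) + q ^ n * t * D n)
    (a : ℤ) (h0 : D a = 0) (h1 : D (a + 1) = 0) : ∀ n, D n = 0 := by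
  have key : ∀ m : ℤ, D (a + m) = 0 ∧ D (a + m + 1) = 0 := by
    intro m
    induction m using Int.induction_on with
    | zero => simpa using ⟨h0, h1⟩
    | succ k ih =>
      constructor
      · rw [show a + ((k:ℤ) + 1) = a + k + 1 by ring]; exact ih.2
      · rw [show a + ((k:ℤ) + 1) + 1 = (a + k) + 2 by ring, hD (a + k), ih.1, ih.2]
        ring
    | pred k ih =>
      have h2 := hD (a + (-(k:ℤ) - 1))
      rw [show a + (-(k:ℤ) - 1) + 2 = a + (-(k:ℤ)) + 1 by ring,
          show a + (-(k:ℤ) - 1) + 1 = a + (-(k:ℤ)) by ring, ih.1, ih.2] at h2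
      have hz : q ^ (a + (-(k:ℤ) - 1)) * t ≠ 0 := mul_ne_zero (zpow_ne_zero _ hq) ht
      constructor
      · have h3 : q ^ (a + (-(k:ℤ) - 1)) * t * D (a + (-(k:ℤ) - 1)) = 0 := by
          linear_combination -h2
        exact (mul_eq_zero.mp h3).resolve_left hz
      · rw [show a + (-(k:ℤ) - 1) + 1 = a + (-(k:ℤ)) by ring]; exact ih.1
  intro n
  have := (key (n - a)).1
  rwa [show a + (n - a) = n by ring] at this

lemma qFib_add (q x t : K) (hq : q ≠ 0) (ht : t ≠ 0) (m : ℤ) (n : ℤ) :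
    qFib q x t (m + n) =
      qFib q x t (m + 1) * qFib q x (q ^ m * t) n
        + q ^ m * t * qFib q x t m * qFib q x (q ^ (m + 1) * t) (n - 1) := by
  have ht1 : q ^ m * t ≠ 0 := mul_ne_zero (zpow_ne_zero _ hq) ht
  have ht2 : q ^ (m + 1) * t ≠ 0 := mul_ne_zero (zpow_ne_zero _ hq) ht
  set D : ℤ → K := fun k =>
    qFib q x t (m + k) - (qFib q x t (m + 1) * qFib q x (q ^ m * t) k
      + q ^ m * t * qFib q x t m * qFib q x (q ^ (m + 1) * t) (k - 1)) with hDdef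
  have hD : ∀ k : ℤ, D (k + 2) = x * D (k + 1) + q ^ k * (q ^ m * t) * D k := by
    intro k
    have r1 := qFib_rec q x t hq ht (m + k)
    have r2 := qFib_rec q x (q ^ m * t) hq ht1 k
    have r3 := qFib_rec q x (q ^ (m + 1) * t) hq ht2 (k - 1)
    rw [show m + k + 2 = m + (k + 2) by ring, show m + k + 1 = m + (k + 1) by ring] at r1
    rw [show k - 1 + 2 = k + 2 - 1 by ring, show k - 1 + 1 = k + 1 - 1 by ring] at r3
    have e1 : q ^ (m + k) = q ^ k * q ^ m := by
      rw [← zpow_add₀ hq]; ring_nf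
    have e2 : q ^ (k - 1) * (q ^ (m + 1) * t) = q ^ k * (q ^ m * t) := by
      rw [← mul_assoc, ← zpow_add₀ hq, ← mul_assoc, ← zpow_add₀ hq]
      ring_nf
    simp only [hDdef]
    rw [r1, r2, r3, e1, e2]
    ring
  have hbase0 : D 0 = 0 := by
    simp only [hDdef]
    rw [show m + (0:ℤ) = m by ring, show ((0:ℤ) - 1) = -((1:ℕ):ℤ) by norm_num,
        qFib_negCast, qFib_zero]
    show qFib q x t m - (qFib q x t (m+1) * 0 + q ^ m * t * qFib q x t m * (q / (q^(m+1)*t))) = 0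
    have hqm : q ^ m ≠ (0:K) := zpow_ne_zero _ hq
    have : q ^ m * t * qFib q x t m * (q / (q ^ (m + 1) * t)) = qFib q x t m := by
      rw [zpow_add₀ hq, zpow_one]
      field_simp
    rw [this]; ring
  have hbase1 : D (0 + 1) = 0 := by
    simp only [hDdef]
    rw [show ((0:ℤ) + 1) = (1:ℤ) by norm_num, show ((1:ℤ) - 1) = (0:ℤ) by norm_num,
        qFib_zero, qFib_one]
    ring
  have hall := qFib_lin_unique q x (q ^ m * t) hq ht1 D hD 0 hbase0 hbase1
  have := hall n
  simp only [hDdef] at this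
  linear_combination this

lemma qFib_wronskian (q x u : K) (n : ℕ) :
    qFibPos q x (q * u) (n + 1) * qFibPos q x u (n + 1)
      - qFibPos q x (q * u) n * qFibPos q x u (n + 2)
    = (-1 : K) ^ n * q ^ (n * (n + 1) / 2) * u ^ n := by
  induction n with
  | zero => simp [qFibPos]
  | succ n ih =>
    have ru : qFibPos q x u (n + 1 + 2)
        = x * qFibPos q x u (n + 1 + 1) + q ^ (n + 1) * u * qFibPos q x u (n + 1) := by
      rw [qFibPos]
    have ru' : qFibPos q x (q * u) (n + 2)
        = x * qFibPos q x (q * u) (n + 1) + q ^ n * (q * u) * qFibPos q x (q * u) n := by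
      rw [qFibPos]
    have hexp : (n + 1) * (n + 1 + 1) / 2 = n * (n + 1) / 2 + (n + 1) := by
      obtain ⟨j, hj⟩ := Nat.even_mul_succ_self n
      have h2 : (n + 1) * (n + 1 + 1) = n * (n + 1) + 2 * (n + 1) := by ring
      omega
    rw [hexp, pow_add]
    linear_combination (qFibPos q x u (n + 2)) * ru'
      - (qFibPos q x (q * u) (n + 1)) * ru - (q ^ (n + 1) * u) * ih

theorem qFib_recurrence_ell_one (q x s : K) (hq : q ≠ 0) (hs : s ≠ 0)
    (ℓ : ℕ) (hℓ : 1 ≤ ℓ) (n : ℤ)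
    (hf : qFib q x (q ^ ℓ * s) (ℓ : ℤ) ≠ 0) :
    qFib q x s n
      - (qFib q x s ((2 * ℓ : ℕ)) / qFib q x (q ^ ℓ * s) (ℓ : ℤ)) *
          qFib q x (q ^ ℓ * s) (n - ℓ)
      + (-1 : K) ^ ℓ * q ^ (ℓ * (3 * ℓ - 1) / 2) * s ^ ℓ *
          (qFib q x s (ℓ : ℤ) / qFib q x (q ^ ℓ * s) (ℓ : ℤ)) *
          qFib q x (q ^ (2 * ℓ) * s) (n - 2 * ℓ) = 0 := by
  obtain ⟨k, rfl⟩ : ∃ k, ℓ = k + 1 := ⟨ℓ - 1, by omega⟩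
  have ht1 : q ^ (k + 1) * s ≠ 0 := mul_ne_zero (pow_ne_zero _ hq) hs
  have ht2 : q ^ (2 * (k + 1)) * s ≠ 0 := mul_ne_zero (pow_ne_zero _ hq) hs
  set u : K := q ^ (k + 1) * s with hu
  set v : K := q ^ (2 * (k + 1)) * s with hv
  set c : ℤ := ((k + 1 : ℕ) : ℤ) with hc
  set σ : K := (-1 : K) ^ (k + 1) * q ^ ((k + 1) * (3 * (k + 1) - 1) / 2) * s ^ (k + 1)
    with hσ
  set E : ℤ → K := fun m =>
    qFib q x s m * qFib q x u c
      - qFib q x s ((2 * (k + 1) : ℕ)) * qFib q x u (m - c)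
      + σ * qFib q x s c * qFib q x v (m - 2 * c) with hE
  -- E satisfies the recurrence with parameter s
  have hErec : ∀ m : ℤ, E (m + 2) = x * E (m + 1) + q ^ m * s * E m := by
    intro m
    have r1 := qFib_rec q x s hq hs m
    have r2 := qFib_rec q x u hq ht1 (m - c)
    have r3 := qFib_rec q x v hq ht2 (m - 2 * c)
    have c2 : q ^ (m - c) * u = q ^ m * s := by
      rw [hu, ← zpow_natCast q (k + 1), ← hc, ← mul_assoc, ← zpow_add₀ hq,
        show m - c + c = m by ring]
    have c3 : q ^ (m - 2 * c) * v = q ^ m * s := by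
      rw [hv, ← zpow_natCast q (2 * (k + 1)),
        show ((2 * (k + 1) : ℕ) : ℤ) = 2 * c by rw [hc]; push_cast; ring,
        ← mul_assoc, ← zpow_add₀ hq, show m - 2 * c + 2 * c = m by ring]
    rw [c2] at r2
    rw [c3] at r3
    simp only [hE]
    rw [show m + 2 - c = (m - c) + 2 by ring, show m + 1 - c = (m - c) + 1 by ring,
        show m + 2 - 2 * c = (m - 2 * c) + 2 by ring,
        show m + 1 - 2 * c = (m - 2 * c) + 1 by ring,
        r1, r2, r3]
    ring
  -- base value at 2c
  have hb0 : E (2 * c) = 0 := by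
    simp only [hE]
    rw [show 2 * c - c = c by ring, show 2 * c - 2 * c = (0 : ℤ) by ring, qFib_zero,
        show (2 : ℤ) * c = ((2 * (k + 1) : ℕ) : ℤ) by rw [hc]; push_cast; ring]
    ring
  -- base value at 2c + 1
  have hb1 : E (2 * c + 1) = 0 := by
    have A1 := qFib_add q x s hq hs c c
    have A2 := qFib_add q x s hq hs c (c + 1)
    have W := qFib_wronskian q x u k
    -- normalize t-arguments and indices
    rw [hc] at A1 A2
    rw [show ((k + 1 : ℕ) : ℤ) + 1 = ((k + 2 : ℕ) : ℤ) by push_cast; ring] at A1 A2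
    rw [zpow_natCast q (k + 1), zpow_natCast q (k + 2)] at A1 A2
    rw [show (q : K) ^ (k + 2) * s = q * (q ^ (k + 1) * s) by ring, ← hu] at A1 A2
    rw [show ((k + 1 : ℕ) : ℤ) + ((k + 1 : ℕ) : ℤ) = ((2 * k + 2 : ℕ) : ℤ) by push_cast; ring,
        show ((k + 1 : ℕ) : ℤ) - 1 = ((k : ℕ) : ℤ) by push_cast; ring] at A1
    rw [show ((k + 1 : ℕ) : ℤ) + ((k + 2 : ℕ) : ℤ) = ((2 * k + 3 : ℕ) : ℤ) by push_cast; ring,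
        show ((k + 2 : ℕ) : ℤ) - 1 = ((k + 1 : ℕ) : ℤ) by push_cast; ring] at A2
    simp only [hE]
    rw [show 2 * c + 1 - c = c + 1 by ring, show 2 * c + 1 - 2 * c = (1 : ℤ) by ring,
        qFib_one, hc,
        show 2 * ((k + 1 : ℕ) : ℤ) + 1 = ((2 * k + 3 : ℕ) : ℤ) by push_cast; ring,
        show ((k + 1 : ℕ) : ℤ) + 1 = ((k + 2 : ℕ) : ℤ) by push_cast; ring,
        show ((2 * (k + 1) : ℕ) : ℤ) = ((2 * k + 2 : ℕ) : ℤ) by push_cast; ring]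
    simp only [qFib_natCast] at A1 A2 ⊢
    rw [hu, mul_pow, ← pow_mul, Nat.mul_comm (k + 1) k, ← hu] at W
    have hexp : (k + 1) * (3 * (k + 1) - 1) / 2 = (k + 1) + (k * (k + 1) / 2 + k * (k + 1)) := by
      obtain ⟨j, hj⟩ := Nat.even_mul_succ_self k
      have h3 : 3 * (k + 1) - 1 = 3 * k + 2 := by omega
      have h2 : (k + 1) * (3 * k + 2) = 3 * (k * (k + 1)) + 2 * (k + 1) := by ring
      rw [h3]
      omega
    rw [hσ, hexp, pow_add, pow_add]
    linear_combination (qFibPos q x u (k + 1)) * A2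
      - (qFibPos q x u (k + 2)) * A1
      + (q ^ (k + 1) * s * qFibPos q x s (k + 1)) * W
  have hall := qFib_lin_unique q x s hq hs E hErec (2 * c) hb0 hb1
  have hEn := hall n
  simp only [hE] at hEn
  rw [show ((2 * (k + 1) : ℕ) : ℤ) = 2 * ((k : ℤ) + 1) by push_cast; ring] at hEn
  field_simp
  rw [show ((2 * (k + 1) : ℕ) : ℤ) = 2 * ((k : ℤ) + 1) by push_cast; ring]
  linear_combination hEn
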